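/- Let G be a finite group. An element g ∈ G gives a central element of the group algebra ℂ[G] if and only if g ∈ Z(G). Consequently, {y ∈ ℂ[G] : Δ(y) ∈ ℂ[G] ⊗ Z(ℂ[G])} = ℂ[Z(G)], where Z(ℂ[G]) is the center of the algebra ℂ[G]. -/

import Mathlib

open TensorProduct

/-- The comultiplication of the group Hopf algebra `ℂ[G]`, determined by `Δ(g) = g ⊗ g`. -/
noncomputable def comulGA (G : Type*) [Group G] :
    MonoidAlgebra ℂ G →ₐ[ℂ] (MonoidAlgebra ℂ G ⊗[ℂ] MonoidAlgebra ℂ G) :=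
  MonoidAlgebra.lift ℂ (MonoidAlgebra ℂ G ⊗[ℂ] MonoidAlgebra ℂ G) G
    { toFun := fun g => MonoidAlgebra.of ℂ G g ⊗ₜ[ℂ] MonoidAlgebra.of ℂ G g
      map_one' := by simp [Algebra.TensorProduct.one_def, MonoidAlgebra.one_def]
      map_mul' := fun a b => by
        simp [Algebra.TensorProduct.tmul_mul_tmul] }

theorem comulGA_of (G : Type*) [Group G] (g : G) :
    comulGA G (MonoidAlgebra.of ℂ G g) = MonoidAlgebra.of ℂ G g ⊗ₜ[ℂ] MonoidAlgebra.of ℂ G g := by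
  simp [comulGA]

theorem comulGA_apply (G : Type*) [Group G] (y : MonoidAlgebra ℂ G) :
    comulGA G y = y.coeff.sum fun h c => c • (MonoidAlgebra.of ℂ G h ⊗ₜ[ℂ] MonoidAlgebra.of ℂ G h) := by
  conv_lhs => rw [← MonoidAlgebra.sum_coeff_single y]
  rw [map_finsuppSum]
  refine Finsupp.sum_congr fun h _ => ?_
  have : (MonoidAlgebra.single h (y.coeff h) : MonoidAlgebra ℂ G) = y.coeff h • MonoidAlgebra.of ℂ G h := by
    simp [MonoidAlgebra.of_apply, MonoidAlgebra.smul_single']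
  rw [this, map_smul, comulGA_of]

noncomputable def Fg (G : Type*) [Group G] (g : G) :
    (MonoidAlgebra ℂ G ⊗[ℂ] MonoidAlgebra ℂ G) →ₗ[ℂ] MonoidAlgebra ℂ G :=
  (TensorProduct.lid ℂ (MonoidAlgebra ℂ G)).toLinearMap ∘ₗ
    TensorProduct.map (Finsupp.lapply g ∘ₗ (MonoidAlgebra.coeffLinearEquiv ℂ).toLinearMap : MonoidAlgebra ℂ G →ₗ[ℂ] ℂ) LinearMap.id

theorem Fg_tmul (G : Type*) [Group G] (g : G) (x y : MonoidAlgebra ℂ G) :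
    Fg G g (x ⊗ₜ[ℂ] y) = x.coeff g • y := by
  simp [Fg]

theorem Fg_comul (G : Type*) [Group G] (g : G) (y : MonoidAlgebra ℂ G) :
    Fg G g (comulGA G y) = y.coeff g • MonoidAlgebra.of ℂ G g := by
  rw [comulGA_apply, map_finsuppSum]
  simp only [map_smul, Fg_tmul]
  rw [Finsupp.sum_eq_single g ?_ (by simp)]
  · have : (MonoidAlgebra.of ℂ G g).coeff g = 1 := by
      simp [MonoidAlgebra.of_apply, Finsupp.single_apply]
    rw [this, one_smul]
  · intro h _ hne
    have : (MonoidAlgebra.of ℂ G h).coeff g = 0 := by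
      simp [MonoidAlgebra.of_apply, Finsupp.single_apply, hne]
    rw [this, zero_smul, smul_zero]

theorem part1 (G : Type*) [Group G] (g : G) :
    MonoidAlgebra.of ℂ G g ∈ Subalgebra.center ℂ (MonoidAlgebra ℂ G) ↔ g ∈ Subgroup.center G := by
  rw [Subalgebra.mem_center_iff, Subgroup.mem_center_iff]
  constructor
  · intro h x
    have h2 := h (MonoidAlgebra.of ℂ G x)
    rw [← map_mul, ← map_mul] at h2
    exact MonoidAlgebra.of_injective h2
  · intro h b
    induction b using MonoidAlgebra.induction_on with
    | of x => rw [← map_mul, ← map_mul, h x]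
    | add f g hf hg => rw [add_mul, mul_add, hf, hg]
    | smul r f hf => rw [smul_mul_assoc, mul_smul_comm, hf]

set_option maxHeartbeats 1000000 in
set_option synthInstance.maxHeartbeats 200000 in
theorem Fg_range (G : Type*) [Group G] (g : G)
    (t : MonoidAlgebra ℂ G ⊗[ℂ] ↥(Subalgebra.center ℂ (MonoidAlgebra ℂ G))) :
    Fg G g (TensorProduct.map
      (LinearMap.id : MonoidAlgebra ℂ G →ₗ[ℂ] MonoidAlgebra ℂ G)
      (Subalgebra.center ℂ (MonoidAlgebra ℂ G)).val.toLinearMap t) ∈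
      Subalgebra.toSubmodule (Subalgebra.center ℂ (MonoidAlgebra ℂ G)) := by
  induction t using TensorProduct.induction_on with
  | zero => simp
  | tmul x z =>
    rw [TensorProduct.map_tmul, Fg_tmul]
    exact Submodule.smul_mem _ _ (by exact z.2)
  | add a b ha hb =>
    rw [map_add, map_add]
    exact Submodule.add_mem _ ha hb


/-- For a finite group `G`: a group element `g` gives a central element of `ℂ[G]` if and only
if `g ∈ Z(G)`; consequently `{y ∈ ℂ[G] : Δ(y) ∈ ℂ[G] ⊗ Z(ℂ[G])} = ℂ[Z(G)]`, the span of
the group elements lying in the center of `G`. -/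
theorem stmt15 (G : Type*) [Group G] [Fintype G] :
    (∀ g : G, MonoidAlgebra.of ℂ G g ∈ Subalgebra.center ℂ (MonoidAlgebra ℂ G) ↔
      g ∈ Subgroup.center G) ∧
    {y : MonoidAlgebra ℂ G | comulGA G y ∈
        LinearMap.range (TensorProduct.map
          (LinearMap.id : MonoidAlgebra ℂ G →ₗ[ℂ] MonoidAlgebra ℂ G)
          (Subalgebra.center ℂ (MonoidAlgebra ℂ G)).val.toLinearMap)} =
      ↑(Submodule.span ℂ {x : MonoidAlgebra ℂ G |
        ∃ z ∈ Subgroup.center G, x = MonoidAlgebra.of ℂ G z}) := by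
  refine ⟨part1 G, ?_⟩
  ext y
  simp only [Set.mem_setOf_eq, SetLike.mem_coe]
  constructor
  · -- hard direction
    rintro ⟨t, ht⟩
    -- each coefficient of y outside Z(G) vanishes
    have key : ∀ g : G, y.coeff g ≠ 0 → g ∈ Subgroup.center G := by
      intro g hg
      have hmem : Fg G g (comulGA G y) ∈ Subalgebra.toSubmodule
          (Subalgebra.center ℂ (MonoidAlgebra ℂ G)) := by
        rw [← ht]; exact Fg_range G g t
      rw [Fg_comul] at hmem
      have : MonoidAlgebra.of ℂ G g ∈ Subalgebra.toSubmodule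
          (Subalgebra.center ℂ (MonoidAlgebra ℂ G)) := by
        have := Submodule.smul_mem _ (y.coeff g)⁻¹ hmem
        rwa [smul_smul, inv_mul_cancel₀ hg, one_smul] at this
      exact (part1 G g).mp this
    -- hence y lies in the span
    rw [← MonoidAlgebra.sum_coeff_single y]
    refine Submodule.sum_mem _ fun g hgs => ?_
    have h1 : (MonoidAlgebra.single g (y.coeff g) : MonoidAlgebra ℂ G) = y.coeff g • MonoidAlgebra.of ℂ G g := by
      simp [MonoidAlgebra.of_apply, MonoidAlgebra.smul_single']
    rw [h1]
    exact Submodule.smul_mem _ _ (Submodule.subset_span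
      ⟨g, key g (Finsupp.mem_support_iff.mp hgs), rfl⟩)
  · -- easy direction
    intro hy
    have hsub : Submodule.span ℂ {x : MonoidAlgebra ℂ G |
        ∃ z ∈ Subgroup.center G, x = MonoidAlgebra.of ℂ G z} ≤
        Submodule.comap ((comulGA G).toLinearMap)
          (LinearMap.range (TensorProduct.map
            (LinearMap.id : MonoidAlgebra ℂ G →ₗ[ℂ] MonoidAlgebra ℂ G)
            (Subalgebra.center ℂ (MonoidAlgebra ℂ G)).val.toLinearMap)) := by
      rw [Submodule.span_le]
      rintro x ⟨z, hz, rfl⟩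
      simp only [SetLike.mem_coe, Submodule.mem_comap, AlgHom.toLinearMap_apply]
      rw [comulGA_of]
      exact ⟨MonoidAlgebra.of ℂ G z ⊗ₜ[ℂ] ⟨MonoidAlgebra.of ℂ G z, (part1 G z).mpr hz⟩, rfl⟩
    exact hsub hy
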